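/- For d ≥ 2, define φ : Mat_d(ℂ) → Mat_{2d−1}(ℂ) by sending the block matrix [[a, bᵗ],[c, B]] (with a ∈ ℂ, b,c ∈ ℂ^{d−1}, B ∈ Mat_{d−1}(ℂ)) to the block matrix [[a, bᵗ/√2, cᵗ/√2],[c/√2, B, 0],[b/√2, 0, Bᵗ]]. Then φ is unital, *-linear, and for every Hermitian A ∈ Her_d(ℂ): A ⪰ 0 if and only if φ(A) ⪰ 0. -/

import Mathlib

open ComplexOrder Matrix

/-- The map φ from the example: sends [[a, bᵗ],[c, B]] to
[[a, bᵗ/√2, cᵗ/√2],[c/√2, B, 0],[b/√2, 0, Bᵗ]]. Here d = m + 1. -/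
noncomputable def phiEx (m : ℕ) (A : Matrix (Unit ⊕ Fin m) (Unit ⊕ Fin m) ℂ) :
    Matrix ((Unit ⊕ Fin m) ⊕ Fin m) ((Unit ⊕ Fin m) ⊕ Fin m) ℂ :=
  Matrix.fromBlocks
    (Matrix.of fun i j =>
      match i, j with
      | Sum.inl _, Sum.inl _ => A (Sum.inl ()) (Sum.inl ())
      | Sum.inl _, Sum.inr j' => A (Sum.inl ()) (Sum.inr j') / (Real.sqrt 2 : ℂ)
      | Sum.inr i', Sum.inl _ => A (Sum.inr i') (Sum.inl ()) / (Real.sqrt 2 : ℂ)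
      | Sum.inr i', Sum.inr j' => A (Sum.inr i') (Sum.inr j'))
    (Matrix.of fun i j =>
      match i with
      | Sum.inl _ => A (Sum.inr j) (Sum.inl ()) / (Real.sqrt 2 : ℂ)
      | Sum.inr _ => 0)
    (Matrix.of fun i j =>
      match j with
      | Sum.inl _ => A (Sum.inl ()) (Sum.inr i) / (Real.sqrt 2 : ℂ)
      | Sum.inr _ => 0)
    (Matrix.of fun i j => A (Sum.inr j) (Sum.inr i))

noncomputable def phiV (m : ℕ) : Matrix (Unit ⊕ Fin m) ((Unit ⊕ Fin m) ⊕ Fin m) ℂ :=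
  Matrix.of fun i j =>
    match i, j with
    | Sum.inl _, Sum.inl (Sum.inl _) => ((Real.sqrt 2 : ℂ))⁻¹
    | Sum.inr i', Sum.inl (Sum.inr j') => if i' = j' then 1 else 0
    | _, _ => 0

noncomputable def phiW (m : ℕ) : Matrix (Unit ⊕ Fin m) ((Unit ⊕ Fin m) ⊕ Fin m) ℂ :=
  Matrix.of fun i j =>
    match i, j with
    | Sum.inl _, Sum.inl (Sum.inl _) => ((Real.sqrt 2 : ℂ))⁻¹
    | Sum.inr i', Sum.inr j' => if i' = j' then 1 else 0
    | _, _ => 0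

lemma sqrt2C_ne : ((Real.sqrt 2 : ℝ) : ℂ) ≠ 0 := by
  simp [Complex.ofReal_ne_zero]

lemma sqrt2C_mul : ((Real.sqrt 2 : ℝ) : ℂ) * ((Real.sqrt 2 : ℝ) : ℂ) = 2 := by
  rw [← Complex.ofReal_mul, Real.mul_self_sqrt] <;> norm_num

lemma phiEx_eq (m : ℕ) (A : Matrix (Unit ⊕ Fin m) (Unit ⊕ Fin m) ℂ) :
    phiEx m A = (phiV m)ᴴ * A * (phiV m) + (phiW m)ᴴ * Aᵀ * (phiW m) := by
  ext i j
  rcases i with (i | i) | i <;> rcases j with (j | j) | j <;>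
    simp [phiEx, phiV, phiW, Matrix.mul_apply, Fintype.sum_sum_type, Matrix.fromBlocks,
      Finset.mul_sum, Finset.sum_mul, apply_ite, div_eq_mul_inv, mul_comm, sqrt2C_mul]
  field_simp
  rw [sq, sqrt2C_mul]; ring

lemma phiV_mulVec (m : ℕ) (y : ((Unit ⊕ Fin m) ⊕ Fin m) → ℂ) :
    (phiV m).mulVec y = Sum.elim (fun _ => ((Real.sqrt 2 : ℂ))⁻¹ * y (Sum.inl (Sum.inl ())))
      (fun i => y (Sum.inl (Sum.inr i))) := by
  ext (i | i) <;>
    simp [phiV, Matrix.mulVec, dotProduct, Fintype.sum_sum_type, apply_ite]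

lemma phiW_mulVec (m : ℕ) (y : ((Unit ⊕ Fin m) ⊕ Fin m) → ℂ) :
    (phiW m).mulVec y = Sum.elim (fun _ => ((Real.sqrt 2 : ℂ))⁻¹ * y (Sum.inl (Sum.inl ())))
      (fun i => y (Sum.inr i)) := by
  ext (i | i) <;>
    simp [phiW, Matrix.mulVec, dotProduct, Fintype.sum_sum_type, apply_ite]

lemma form_conjTranspose_mul_mul {n k : Type*} [Fintype n] [Fintype k]
    (A : Matrix n n ℂ) (B : Matrix n k ℂ) (y : k → ℂ) :
    star y ⬝ᵥ (Bᴴ * A * B) *ᵥ y = star (B *ᵥ y) ⬝ᵥ A *ᵥ (B *ᵥ y) := by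
  rw [← Matrix.mulVec_mulVec, ← Matrix.mulVec_mulVec, Matrix.dotProduct_mulVec,
    ← Matrix.star_mulVec]

lemma form_transpose {n : Type*} [Fintype n] (A : Matrix n n ℂ) (w : n → ℂ) :
    star w ⬝ᵥ Aᵀ *ᵥ w = star (star w) ⬝ᵥ A *ᵥ (star w) := by
  simp only [dotProduct, Matrix.mulVec, Matrix.transpose_apply, Pi.star_apply,
    star_star, Finset.mul_sum]
  rw [Finset.sum_comm]
  congr 1; ext i; congr 1; ext j; ring

lemma star_s_mul_s (c : ℂ) :
    star (if c = 0 then 1 else (‖c‖ : ℂ) / c) * (if c = 0 then 1 else (‖c‖ : ℂ) / c) = 1 := by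
  split_ifs with h
  · simp
  · rw [star_div₀, Complex.star_def, Complex.conj_ofReal]
    rw [div_mul_div_comm, ← Complex.ofReal_mul, ← Complex.normSq_eq_conj_mul_self]
    rw [show ‖c‖ * ‖c‖ = Complex.normSq c by
      rw [Complex.normSq_eq_norm_sq]; ring]
    exact div_self (by simpa [Complex.ofReal_eq_zero] using (Complex.normSq_pos.mpr h).ne')

lemma star_s_mul_c (c : ℂ) :
    star ((if c = 0 then 1 else (‖c‖ : ℂ) / c) * c) = (if c = 0 then 1 else (‖c‖ : ℂ) / c) * c := by
  split_ifs with h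
  · simp [h]
  · rw [div_mul_cancel₀ _ h, Complex.star_def, Complex.conj_ofReal]

lemma half_of_double {z : ℂ} (h : 0 ≤ z + z) : 0 ≤ z := by
  have h2 : (0:ℂ) ≤ (2:ℂ)⁻¹ := by
    rw [Complex.le_def]; norm_num
  have := mul_nonneg h2 h
  rw [mul_add] at this
  calc (0:ℂ) ≤ 2⁻¹ * z + 2⁻¹ * z := this
    _ = z := by ring

theorem stmt15 (m : ℕ) (hm : 1 ≤ m) :
    phiEx m 1 = 1 ∧
    (∀ A, phiEx m Aᴴ = (phiEx m A)ᴴ) ∧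
    (∀ (c : ℂ) (A B : Matrix (Unit ⊕ Fin m) (Unit ⊕ Fin m) ℂ),
      phiEx m (c • A + B) = c • phiEx m A + phiEx m B) ∧
    ∀ A : Matrix (Unit ⊕ Fin m) (Unit ⊕ Fin m) ℂ, A.IsHermitian →
      (A.PosSemidef ↔ (phiEx m A).PosSemidef) := by
  refine ⟨?_, ?_, ?_, ?_⟩
  · ext i j
    rcases i with (i | i) | i <;> rcases j with (j | j) | j <;>
      simp [phiEx, Matrix.one_apply, eq_comm]
  · intro A
    ext i j
    rcases i with (i | i) | i <;> rcases j with (j | j) | j <;>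
      simp [phiEx, Matrix.conjTranspose_apply, star_div₀, Complex.star_def, Complex.conj_ofReal]
  · intro c A B
    ext i j
    rcases i with (i | i) | i <;> rcases j with (j | j) | j <;>
      simp [phiEx, add_div, mul_div_assoc, mul_add]
  · intro A hA
    constructor
    · intro hpsd
      rw [phiEx_eq]
      exact (hpsd.conjTranspose_mul_mul_same _).add
        ((hpsd.transpose).conjTranspose_mul_mul_same _)
    · intro h
      refine Matrix.PosSemidef.of_dotProduct_mulVec_nonneg hA fun x => ?_
      set c := x (Sum.inl ()) with hc
      set s : ℂ := if c = 0 then 1 else (‖c‖ : ℂ) / c with hsdef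
      have hs : star s * s = 1 := star_s_mul_s c
      set x' : (Unit ⊕ Fin m) → ℂ := s • x with hx'
      have hx'c : star (x' (Sum.inl ())) = x' (Sum.inl ()) := by
        rw [hx']; exact star_s_mul_c c
      set y : ((Unit ⊕ Fin m) ⊕ Fin m) → ℂ :=
        Sum.elim (Sum.elim (fun _ => (Real.sqrt 2 : ℂ) * x' (Sum.inl ()))
          (fun i => x' (Sum.inr i))) (fun i => star (x' (Sum.inr i))) with hy
      have hVy : (phiV m) *ᵥ y = x' := by
        rw [phiV_mulVec]
        ext (i | i)
        · simp [hy, inv_mul_cancel_left₀ sqrt2C_ne]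
        · simp [hy]
      have hWy : star ((phiW m) *ᵥ y) = x' := by
        rw [phiW_mulVec]
        ext (i | i)
        · simp only [Pi.star_apply, Sum.elim_inl]
          rw [hy]
          simp only [Sum.elim_inl, Sum.elim_inr]
          rw [inv_mul_cancel_left₀ sqrt2C_ne]
          exact hx'c
        · simp [hy]
      have h0 := h.dotProduct_mulVec_nonneg y
      rw [phiEx_eq, Matrix.add_mulVec, dotProduct_add,
        form_conjTranspose_mul_mul, form_conjTranspose_mul_mul, form_transpose,
        hVy, hWy] at h0
      have hq : (0:ℂ) ≤ star x' ⬝ᵥ A *ᵥ x' := half_of_double h0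
      have : star x' ⬝ᵥ A *ᵥ x' = star x ⬝ᵥ A *ᵥ x := by
        rw [hx', star_smul, Matrix.mulVec_smul, smul_dotProduct,
          dotProduct_smul, smul_smul, hs, one_smul]
      rwa [this] at hq
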